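/- Let α ∈ (0, 1), B > 0, and c₁, c₂ > 0. In the two-firm Cournot game where firm i chooses q_i > 0 and earns Π_i(q₁, q₂) = αB q_i/(q₁ + q₂) − c_i q_i (arising from a Cobb–Douglas consumer spending share α on two perfectly substitutable goods), the quantities q*_i = αB c₁ c₂ / (c_i (c₁ + c₂)²) form a Nash equilibrium, with equilibrium profits Π_i = αB c_{−i}²/(c₁ + c₂)² = αB/(1 + c_i/c_{−i})². Consequently, if c₁ < c₂ (the firm with more data), then full data sharing (which equalizes costs) strictly lowers firm 1's profit from αB/(1 + c₁/c₂)² to αB/4, so collaboration is never profitable for the firm with more data. -/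

import Mathlib

/-- Best-response lemma: if `K*Q = c*(qs+Q)^2` (the first-order condition), then `qs`
maximizes `K*q/(q+Q) - c*q` over `q > 0`. -/
lemma cournot_br (K c Q qs : ℝ) (hK : 0 < K) (hc : 0 < c) (hQ : 0 < Q) (hqs : 0 < qs)
    (hfoc : K * Q = c * (qs + Q) ^ 2) :
    ∀ q : ℝ, 0 < q → K * q / (q + Q) - c * q ≤ K * qs / (qs + Q) - c * qs := by
  intro q hq
  have hA : 0 < q + Q := by linarith
  have hAs : 0 < qs + Q := by linarith
  rw [div_sub' hA.ne', div_sub' hAs.ne', div_le_div_iff₀ hA hAs]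
  nlinarith [mul_nonneg hc.le (sq_nonneg (q - qs)), sq_nonneg (q - qs)]

theorem cobb_douglas_cournot
    (α B c₁ c₂ : ℝ) (hα₁ : 0 < α) (hα₂ : α < 1) (hB : 0 < B)
    (hc₁ : 0 < c₁) (hc₂ : 0 < c₂)
    (q₁s q₂s : ℝ)
    (hq₁ : q₁s = α * B * c₁ * c₂ / (c₁ * (c₁ + c₂) ^ 2))
    (hq₂ : q₂s = α * B * c₁ * c₂ / (c₂ * (c₁ + c₂) ^ 2)) :
    (∀ q : ℝ, 0 < q →
      α * B * q / (q + q₂s) - c₁ * q ≤ α * B * q₁s / (q₁s + q₂s) - c₁ * q₁s) ∧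
    (∀ q : ℝ, 0 < q →
      α * B * q / (q₁s + q) - c₂ * q ≤ α * B * q₂s / (q₁s + q₂s) - c₂ * q₂s) ∧
    α * B * q₁s / (q₁s + q₂s) - c₁ * q₁s = α * B * c₂ ^ 2 / (c₁ + c₂) ^ 2 ∧
    α * B * q₂s / (q₁s + q₂s) - c₂ * q₂s = α * B * c₁ ^ 2 / (c₁ + c₂) ^ 2 ∧
    α * B * c₂ ^ 2 / (c₁ + c₂) ^ 2 = α * B / (1 + c₁ / c₂) ^ 2 ∧
    α * B * c₁ ^ 2 / (c₁ + c₂) ^ 2 = α * B / (1 + c₂ / c₁) ^ 2 ∧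
    (c₁ < c₂ → α * B / 4 < α * B / (1 + c₁ / c₂) ^ 2) := by
  have hK : 0 < α * B := mul_pos hα₁ hB
  have hs : 0 < c₁ + c₂ := by linarith
  have hs2 : 0 < (c₁ + c₂) ^ 2 := by positivity
  have hq₁' : q₁s = α * B * c₂ / (c₁ + c₂) ^ 2 := by
    rw [hq₁]; field_simp
  have hq₂' : q₂s = α * B * c₁ / (c₁ + c₂) ^ 2 := by
    rw [hq₂]; field_simp
  have hq₁p : 0 < q₁s := by rw [hq₁']; positivity
  have hq₂p : 0 < q₂s := by rw [hq₂']; positivity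
  refine ⟨?_, ?_, ?_, ?_, ?_, ?_, ?_⟩
  · refine cournot_br (α*B) c₁ q₂s q₁s hK hc₁ hq₂p hq₁p ?_
    rw [hq₁', hq₂']; field_simp; ring
  · intro q hq
    have := cournot_br (α*B) c₂ q₁s q₂s hK hc₂ hq₁p hq₂p
      (by rw [hq₁', hq₂']; field_simp) q hq
    calc α * B * q / (q₁s + q) - c₂ * q
        = α * B * q / (q + q₁s) - c₂ * q := by rw [add_comm]
      _ ≤ α * B * q₂s / (q₂s + q₁s) - c₂ * q₂s := this
      _ = α * B * q₂s / (q₁s + q₂s) - c₂ * q₂s := by rw [add_comm q₂s]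
  · rw [hq₁', hq₂']; field_simp; ring
  · rw [hq₁', hq₂']; field_simp; ring
  · field_simp
    ring
  · field_simp
  · intro h
    have h1 : (1 + c₁ / c₂) ^ 2 < 4 := by
      have : c₁ / c₂ < 1 := (div_lt_one hc₂).2 h
      have h0 : 0 < c₁ / c₂ := by positivity
      nlinarith
    have h2 : 0 < (1 + c₁ / c₂) ^ 2 := by positivity
    exact div_lt_div_of_pos_left hK h2 h1
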